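/- arXiv:2211.14659 — 2 statements merged into one kernel-verified Lean document; each statement's English description precedes it below -/
import Mathlib

section
/- Suppose measures μ_out^l, μ_in^l, μ_out^r, μ_in^r on a measurable space X satisfy: (i) μ_out^r = R · μ_in^r and μ_out^l = R · μ_in^l for a measurable function R : X → [0, 1), and (ii) there are measurable bijections Φ_{l→r}, Φ_{r→l} with μ_in^l(B) = μ_out^r(Φ_{l→r}B) and μ_in^r(B) = μ_out^l(Φ_{r→l}B) for all Borel B, and (iii) for every Borel set B there exists k ≥ 0 with μ_in^r((Φ_{l→r} ∘ (Φ_{r→l}∘Φ_{l→r})^{k-1})(B)) = 0 or R = 0 on the orbit. Then on any Borel set B whose forward orbit under Φ := Φ_{r→l}∘Φ_{l→r} leaves X after finitely many steps (i.e. Φ^{k₀}(B) has μ_in^r-image zero), one has μ_out^l(B) = 0. -/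
open MeasureTheory

/-- Abstract bookkeeping for reflected defect measures (the `beam_follow` argument):
suppose `μ_out^{r} = R·μ_in^{r}` and `μ_out^{l} = R·μ_in^{l}` with `0 ≤ R < 1`, and the
transport relations `μ_in^{l}(B) = μ_out^{r}(Φ_{l→r} B)`, `μ_in^{r}(B) = μ_out^{l}(Φ_{r→l} B)`
hold along measurable bijections. If the forward orbit of a Borel set `B` under
`Φ = Φ_{r→l} ∘ Φ_{l→r}` leaves the space after finitely many steps (i.e. some iterate has
`μ_in^{r}`-image zero), then `μ_out^{l}(B) = 0`. -/
theorem escaping_orbit_has_no_mass {X : Type*} [MeasurableSpace X]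
    (R : X → ℝ) (hRmeas : Measurable R) (hR0 : ∀ x, 0 ≤ R x) (hR1 : ∀ x, R x < 1)
    (μoutl μinl μoutr μinr : Measure X)
    (Φlr Φrl : X ≃ᵐ X)
    (hrefl_r : ∀ A : Set X, MeasurableSet A →
      μoutr A = ∫⁻ x in A, ENNReal.ofReal (R x) ∂μinr)
    (hrefl_l : ∀ A : Set X, MeasurableSet A →
      μoutl A = ∫⁻ x in A, ENNReal.ofReal (R x) ∂μinl)
    (htrans_l : ∀ A : Set X, MeasurableSet A → μinl A = μoutr (Φlr '' A))
    (htrans_r : ∀ A : Set X, MeasurableSet A → μinr A = μoutl (Φrl '' A))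
    (B : Set X) (hB : MeasurableSet B)
    (hescape : ∃ k : ℕ, μinr (Φlr '' ((fun x => Φrl (Φlr x))^[k] '' B)) = 0) :
    μoutl B = 0 := by
  obtain ⟨k, hk⟩ := hescape
  -- pointwise bound: ofReal (R x) ≤ 1
  have hRle : ∀ x, ENNReal.ofReal (R x) ≤ 1 := fun x =>
    ENNReal.ofReal_le_one.2 (hR1 x).le
  have hbound : ∀ (μ : Measure X) (A : Set X),
      (∫⁻ x in A, ENNReal.ofReal (R x) ∂μ) ≤ μ A := by
    intro μ A
    calc (∫⁻ x in A, ENNReal.ofReal (R x) ∂μ) ≤ ∫⁻ _ in A, 1 ∂μ :=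
          lintegral_mono fun x => hRle x
      _ = μ A := setLIntegral_one A
  set Φ : X ≃ᵐ X := Φlr.trans Φrl with hΦ
  have hΦfun : (fun x => Φrl (Φlr x)) = ⇑Φ := rfl
  -- one step of the beam-follow inequality
  have hstep : ∀ A : Set X, MeasurableSet A → μoutl A ≤ μoutl (Φ '' A) := by
    intro A hA
    have h1 : μoutl A ≤ μinl A := by
      rw [hrefl_l A hA]; exact hbound _ _
    have h2 : μinl A = μoutr (Φlr '' A) := htrans_l A hA
    have hA' : MeasurableSet (Φlr '' A) := Φlr.measurableSet_image.2 hA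
    have h3 : μoutr (Φlr '' A) ≤ μinr (Φlr '' A) := by
      rw [hrefl_r _ hA']; exact hbound _ _
    have h4 : μinr (Φlr '' A) = μoutl (Φrl '' (Φlr '' A)) := htrans_r _ hA'
    have himg : Φrl '' (Φlr '' A) = Φ '' A := by
      rw [← Set.image_comp]; rfl
    calc μoutl A ≤ μinl A := h1
      _ = μoutr (Φlr '' A) := h2
      _ ≤ μinr (Φlr '' A) := h3
      _ = μoutl (Φrl '' (Φlr '' A)) := h4
      _ = μoutl (Φ '' A) := by rw [himg]
  -- iterate
  have hiter : ∀ n : ℕ, MeasurableSet ((⇑Φ)^[n] '' B) ∧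
      μoutl B ≤ μoutl ((⇑Φ)^[n] '' B) := by
    intro n
    induction n with
    | zero =>
      simp only [Function.iterate_zero, Set.image_id]
      exact ⟨hB, le_rfl⟩
    | succ n ih =>
      obtain ⟨hmeas, hle⟩ := ih
      have himg : (⇑Φ)^[n + 1] '' B = Φ '' ((⇑Φ)^[n] '' B) := by
        rw [Function.iterate_succ', Set.image_comp]
      constructor
      · rw [himg]; exact Φ.measurableSet_image.2 hmeas
      · rw [himg]; exact hle.trans (hstep _ hmeas)
  obtain ⟨hmeas, hle⟩ := hiter k
  rw [hΦfun] at hk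
  -- final step: the k-th image escapes
  have hfin : μoutl ((⇑Φ)^[k] '' B) = 0 := by
    have h1 : μoutl ((⇑Φ)^[k] '' B) ≤ μinl ((⇑Φ)^[k] '' B) := by
      rw [hrefl_l _ hmeas]; exact hbound _ _
    have h2 : μinl ((⇑Φ)^[k] '' B) = μoutr (Φlr '' ((⇑Φ)^[k] '' B)) :=
      htrans_l _ hmeas
    have hA' : MeasurableSet (Φlr '' ((⇑Φ)^[k] '' B)) :=
      Φlr.measurableSet_image.2 hmeas
    have h3 : μoutr (Φlr '' ((⇑Φ)^[k] '' B)) ≤ μinr (Φlr '' ((⇑Φ)^[k] '' B)) := by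
      rw [hrefl_r _ hA']; exact hbound _ _
    have := (h1.trans (h2.le.trans (h3.trans hk.le)))
    exact le_antisymm this zero_le
  exact le_antisymm (hle.trans hfin.le) zero_le
end

section
/- For any finite set of base points x'₁, …, x'ₙ on a line and any ε > 0, the set of frequency tuples (ξ'₁, …, ξ'ₙ) ∈ B(0,1)ⁿ for which the family of Diracs (δ_{x'_j, ξ'_j}) fails to be non-interacting under the billiard return map Φ(y, ξ') = (y + c·ξ'/√(1−ξ'²), ξ') (c > 0 fixed) — i.e., for which some point equals the image of another under some iterate Φⁿ, n ≥ 0, with distinct indices — is contained in a countable union of sets each defined by an equation x'_{j₁} − x'_{j₂} = n·c·ξ'/√(1−ξ'²) for some n ∈ ℤ; in particular, for each fixed choice of the other coordinates, the set of bad values of a single ξ'_j is countable. -/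
open Set

private lemma iter_formula (c : ℝ) (n : ℕ) (y ξ : ℝ) :
    (fun p : ℝ × ℝ => (p.1 + c * p.2 / Real.sqrt (1 - p.2 ^ 2), p.2))^[n] (y, ξ)
      = (y + n * (c * ξ / Real.sqrt (1 - ξ ^ 2)), ξ) := by
  induction n with
  | zero => simp
  | succ n ih =>
    rw [Function.iterate_succ_apply', ih]
    push_cast
    simp only [Prod.mk.injEq]
    exact ⟨by ring, trivial⟩

private lemma inj_aux {s t : ℝ} (hs : |s| < 1) (ht : |t| < 1)
    (h : s / Real.sqrt (1 - s ^ 2) = t / Real.sqrt (1 - t ^ 2)) : s = t := by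
  have hs2 : 0 < 1 - s ^ 2 := by nlinarith [abs_nonneg s, sq_abs s, abs_nonneg t]
  have ht2 : 0 < 1 - t ^ 2 := by nlinarith [abs_nonneg t, sq_abs t]
  have has : 0 < Real.sqrt (1 - s ^ 2) := Real.sqrt_pos.2 hs2
  have hat : 0 < Real.sqrt (1 - t ^ 2) := Real.sqrt_pos.2 ht2
  have h1 : s * Real.sqrt (1 - t ^ 2) = t * Real.sqrt (1 - s ^ 2) := by
    field_simp at h; linarith [h]
  have h2 : s ^ 2 * (1 - t ^ 2) = t ^ 2 * (1 - s ^ 2) := by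
    have := congrArg (fun z => z ^ 2) h1
    simp only [mul_pow] at this
    rw [Real.sq_sqrt hs2.le, Real.sq_sqrt ht2.le] at this
    linarith
  have hsq : s ^ 2 = t ^ 2 := by nlinarith
  have : s = t ∨ s = -t := sq_eq_sq_iff_eq_or_eq_neg.mp hsq
  rcases this with h' | h'
  · exact h'
  · subst h'
    -- (-t) * √(1-t²) = t * √(1-t²)  (since s² = t², √(1-s²)=√(1-t²))
    have : (-t) * Real.sqrt (1 - t ^ 2) = t * Real.sqrt (1 - (-t) ^ 2) := h1
    have ht0 : t = 0 := by
      rw [neg_pow, show ((-1:ℝ))^2 = 1 by norm_num, one_mul] at this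
      nlinarith [hat]
    simp [ht0]

/-- Genericity of non-interacting Diracs (behind Lemma 7.3): for the billiard return map
`Φ(y, ξ') = (y + c ξ'/√(1−ξ'²), ξ')` with `c > 0` and base points `x'_1, …, x'_N`, the set
of frequency tuples for which some point equals the image of another (with distinct
indices) under some iterate `Φⁿ` is contained in the countable union over `(j₁, j₂, n)`
of the sets defined by `x'_{j₁} − x'_{j₂} = n c ξ'_{j₂}/√(1 − ξ'^2_{j₂})`; and for fixed
distinct base points the set of bad values of a single frequency is countable. -/
theorem bad_frequencies_countable (c : ℝ) (hc : 0 < c) (N : ℕ) (x : Fin N → ℝ) :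
    ({ξ : Fin N → ℝ | (∀ j, |ξ j| < 1) ∧ ∃ j₁ j₂ : Fin N, j₁ ≠ j₂ ∧ ∃ n : ℕ,
        ((x j₁, ξ j₁) : ℝ × ℝ) =
          (fun p : ℝ × ℝ => (p.1 + c * p.2 / Real.sqrt (1 - p.2 ^ 2), p.2))^[n]
            (x j₂, ξ j₂)}
      ⊆ ⋃ (j₁ : Fin N) (j₂ : Fin N) (n : ℕ),
          {ξ : Fin N → ℝ |
            x j₁ - x j₂ = (n : ℝ) * c * ξ j₂ / Real.sqrt (1 - (ξ j₂) ^ 2)}) ∧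
    (∀ x₁ x₂ : ℝ, x₁ ≠ x₂ →
      Set.Countable {s : ℝ | |s| < 1 ∧
        ∃ n : ℕ, x₁ - x₂ = (n : ℝ) * c * s / Real.sqrt (1 - s ^ 2)}) := by
  constructor
  · rintro ξ ⟨-, j₁, j₂, -, n, h⟩
    rw [iter_formula] at h
    obtain ⟨h1, -⟩ := Prod.mk.injEq .. ▸ h
    refine mem_iUnion.2 ⟨j₁, mem_iUnion.2 ⟨j₂, mem_iUnion.2 ⟨n, ?_⟩⟩⟩
    simp only [mem_setOf_eq]
    rw [h1]; ring
  · intro x₁ x₂ hne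
    have : {s : ℝ | |s| < 1 ∧
        ∃ n : ℕ, x₁ - x₂ = (n : ℝ) * c * s / Real.sqrt (1 - s ^ 2)}
        ⊆ ⋃ n : ℕ, {s : ℝ | |s| < 1 ∧
          x₁ - x₂ = (n : ℝ) * c * s / Real.sqrt (1 - s ^ 2)} := by
      rintro s ⟨h1, n, h2⟩
      exact mem_iUnion.2 ⟨n, h1, h2⟩
    refine Set.Countable.mono this (Set.countable_iUnion fun n => ?_)
    apply Set.Subsingleton.countable
    rintro s ⟨hs, hes⟩ t ⟨ht, het⟩
    rcases Nat.eq_zero_or_pos n with rfl | hn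
    · simp at hes
      exact absurd (sub_eq_zero.mp hes) hne
    · have hnc : (n : ℝ) * c ≠ 0 := by positivity
      apply inj_aux hs ht
      have : (n : ℝ) * c * (s / Real.sqrt (1 - s ^ 2))
           = (n : ℝ) * c * (t / Real.sqrt (1 - t ^ 2)) := by
        rw [mul_div_assoc] at hes het
        linarith [hes, het]
      exact mul_left_cancel₀ hnc this
end
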